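/- Let Q_ε be symmetric positive definite, p ∈ ℝ^N, Ω = {v ≥ 0 : ‖v‖₀ ≤ m}. Suppose there exists w̃ ∈ Ω with ‖w̃‖₀ ≤ m, w̃ in the simplex, and pᵀw̃ > 0. If v̂ minimizes f(v) = ½ vᵀQ_ε v − pᵀv over Ω, then v̂ ≠ 0 and pᵀv̂ = v̂ᵀQ_ε v̂ > 0. -/

import Mathlib

open Matrix Finset

theorem stmt_2 (N m : ℕ) (Q : Matrix (Fin N) (Fin N) ℝ) (hQ : Q.PosDef)
    (p : Fin N → ℝ)
    (Ω : Set (Fin N → ℝ))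
    (hΩ : Ω = {v | (∀ i, 0 ≤ v i) ∧ (Finset.univ.filter fun i => v i ≠ 0).card ≤ m})
    (hexist : ∃ w ∈ Ω, (∑ i, w i) = 1 ∧ 0 < p ⬝ᵥ w)
    (vh : Fin N → ℝ) (hv : vh ∈ Ω)
    (hmin : ∀ v ∈ Ω,
      (1/2) * (vh ⬝ᵥ Q.mulVec vh) - p ⬝ᵥ vh ≤ (1/2) * (v ⬝ᵥ Q.mulVec v) - p ⬝ᵥ v) :
    vh ≠ 0 ∧ p ⬝ᵥ vh = vh ⬝ᵥ Q.mulVec vh ∧ 0 < p ⬝ᵥ vh := by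
  subst hΩ
  obtain ⟨w, hw, hsum, hpw⟩ := hexist
  -- scaling stays in Ω
  have hscale : ∀ (t : ℝ), 0 ≤ t → ∀ v : Fin N → ℝ,
      v ∈ {v : Fin N → ℝ | (∀ i, 0 ≤ v i) ∧ (Finset.univ.filter fun i => v i ≠ 0).card ≤ m} →
      (t • v) ∈ {v : Fin N → ℝ | (∀ i, 0 ≤ v i) ∧ (Finset.univ.filter fun i => v i ≠ 0).card ≤ m} := by
    intro t ht v hvm
    refine ⟨fun i => mul_nonneg ht (hvm.1 i), le_trans (Finset.card_le_card ?_) hvm.2⟩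
    intro i hi
    simp only [Finset.mem_filter, Finset.mem_univ, true_and, Pi.smul_apply, smul_eq_mul] at hi ⊢
    intro h0
    exact hi (by rw [h0, mul_zero])
  have hdot : ∀ (t : ℝ) (v : Fin N → ℝ), p ⬝ᵥ (t • v) = t * (p ⬝ᵥ v) := by
    intro t v
    rw [dotProduct_smul]; rfl
  have hquad : ∀ (t : ℝ) (v : Fin N → ℝ),
      (t • v) ⬝ᵥ Q.mulVec (t • v) = t ^ 2 * (v ⬝ᵥ Q.mulVec v) := by
    intro t v
    rw [Matrix.mulVec_smul, smul_dotProduct, dotProduct_smul]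
    simp [smul_eq_mul]; ring
  set a := vh ⬝ᵥ Q.mulVec vh with ha_def
  set b := p ⬝ᵥ vh with hb_def
  set aw := w ⬝ᵥ Q.mulVec w with haw_def
  set bw := p ⬝ᵥ w with hbw_def
  have hwne : w ≠ 0 := by
    intro h
    rw [h] at hsum
    simp at hsum
  have hawpos : 0 < aw := hQ.dotProduct_mulVec_pos hwne
  -- f(vh) ≤ f((bw/aw) • w) < 0
  have htpos : 0 < bw / aw := div_pos hpw hawpos
  have hneg : (1/2) * a - b < 0 := by
    have h1 := hmin ((bw/aw) • w) (hscale _ htpos.le w hw)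
    rw [hquad, hdot] at h1
    have h2 : (1/2) * ((bw/aw)^2 * aw) - (bw/aw) * bw = -(bw^2 / (2*aw)) := by
      field_simp; ring
    rw [h2] at h1
    have : 0 < bw^2 / (2*aw) := div_pos (by positivity) (by linarith)
    linarith
  have hvne : vh ≠ 0 := by
    intro h
    have ha0 : a = 0 := by rw [ha_def, h]; simp
    have hb0 : b = 0 := by rw [hb_def, h]; simp
    rw [ha0, hb0] at hneg
    simp at hneg
  have hapos : 0 < a := hQ.dotProduct_mulVec_pos hvne
  have hbpos : 0 < b := by linarith
  -- optimality at t = b/a gives a = b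
  have hkey := hmin ((b/a) • vh) (hscale _ (div_pos hbpos hapos).le vh hv)
  rw [hquad, hdot] at hkey
  rw [← ha_def, ← hb_def] at hkey
  have heq : b = a := by
    have h3 : (b/a)^2 * a = b^2 / a := by field_simp
    have h4 : (b/a) * b = b^2 / a := by field_simp
    rw [h3, h4] at hkey
    have h5 : b^2 / a * a = b^2 := by field_simp
    nlinarith [sq_nonneg (a - b)]
  exact ⟨hvne, by rw [heq], hbpos⟩
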